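/- Let U ⊆ ℂ be a connected open set containing 0 and let f, g be holomorphic functions on U with f(0) = g(0) = 0 satisfying (1 + |f(z)|²)·(1 − |g(z)|²) = 1 for all z ∈ U. Then f and g are both identically zero on U. -/

import Mathlib

open Complex Filter Metric

/-- If `f` is complex-differentiable at `conj z`, then `w ↦ conj (f (conj w))` is
complex-differentiable at `z`. -/
lemma hasDerivAt_conj_comp {f : ℂ → ℂ} {d z : ℂ} (h : HasDerivAt f d ((starRingEnd ℂ) z)) :
    HasDerivAt (fun w => (starRingEnd ℂ) (f ((starRingEnd ℂ) w))) ((starRingEnd ℂ) d) z := by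
  rw [hasDerivAt_iff_tendsto] at h ⊢
  have hc : Filter.Tendsto (fun w : ℂ => (starRingEnd ℂ) w) (nhds z) (nhds ((starRingEnd ℂ) z)) :=
    (Complex.continuous_conj).continuousAt
  have h2 := h.comp hc
  convert h2 using 1
  funext w
  simp only [Function.comp, smul_eq_mul]
  rw [show (starRingEnd ℂ) (f ((starRingEnd ℂ) w)) - (starRingEnd ℂ) (f ((starRingEnd ℂ) z)) - (w - z) * (starRingEnd ℂ) d
      = (starRingEnd ℂ) (f ((starRingEnd ℂ) w) - f ((starRingEnd ℂ) z) - ((starRingEnd ℂ) w - (starRingEnd ℂ) z) * d) by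
    simp only [map_sub, map_mul, Complex.conj_conj]]
  rw [show (starRingEnd ℂ) w - (starRingEnd ℂ) z = (starRingEnd ℂ) (w - z) from (map_sub _ _ _).symm]
  rw [Complex.norm_conj, Complex.norm_conj]

/-- Umehara's theorem in dimension one: `(1+|f|²)(1−|g|²) = 1` forces `f ≡ 0` and `g ≡ 0`. -/
theorem stmt_14 (U : Set ℂ) (hU : IsOpen U) (hUconn : IsConnected U) (h0 : (0 : ℂ) ∈ U)
    (f g : ℂ → ℂ) (hf : DifferentiableOn ℂ f U) (hg : DifferentiableOn ℂ g U)
    (hf0 : f 0 = 0) (hg0 : g 0 = 0)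
    (heq : ∀ z ∈ U, (1 + ‖f z‖ ^ 2) * (1 - ‖g z‖ ^ 2) = 1) :
    (∀ z ∈ U, f z = 0) ∧ (∀ z ∈ U, g z = 0) := by
  -- It suffices to show `f ≡ 0` on `U`.
  suffices hfU : ∀ z ∈ U, f z = 0 by
    refine ⟨hfU, fun z hz => ?_⟩
    have h := heq z hz
    rw [hfU z hz] at h
    simp only [map_zero, norm_zero, ne_eq, OfNat.ofNat_ne_zero, not_false_eq_true, zero_pow, zero_add,
      one_mul] at h
    have : ‖g z‖ ^ 2 = 0 := by linarith
    have := pow_eq_zero_iff (n := 2) (by norm_num) |>.1 this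
    exact norm_eq_zero.1 this
  -- the pointwise key identity, in complex form
  have hpt : ∀ z ∈ U, f z * (starRingEnd ℂ) (f z) - g z * (starRingEnd ℂ) (g z)
      - (f z * g z) * (starRingEnd ℂ) (f z * g z) = 0 := by
    intro z hz
    have h := heq z hz
    rw [Complex.mul_conj, Complex.mul_conj, Complex.mul_conj]
    rw [show (Complex.normSq (f z) : ℂ) - (Complex.normSq (g z) : ℂ)
        - (Complex.normSq (f z * g z) : ℂ)
        = ((Complex.normSq (f z) - Complex.normSq (g z) - Complex.normSq (f z * g z) : ℝ) : ℂ) by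
      push_cast; ring]
    rw [Complex.ofReal_eq_zero]
    rw [Complex.normSq_eq_norm_sq, Complex.normSq_eq_norm_sq, Complex.normSq_eq_norm_sq, norm_mul]
    nlinarith [h]
  obtain ⟨R, hR0, hBU⟩ : ∃ R > 0, Metric.ball (0:ℂ) R ⊆ U := Metric.isOpen_iff.1 hU 0 h0
  set B : Set ℂ := Metric.ball (0:ℂ) R with hBdef
  have hBopen : IsOpen B := Metric.isOpen_ball
  have hBconn : IsPreconnected B := (convex_ball (0:ℂ) R).isPreconnected
  have h0B : (0:ℂ) ∈ B := Metric.mem_ball_self hR0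
  -- It suffices to show `f ≡ 0` on the ball `B`.
  suffices hfB : ∀ z ∈ B, f z = 0 by
    intro z hz
    have hev : ∀ᶠ z in nhds (0:ℂ), f z = 0 :=
      Filter.eventually_of_mem (Metric.ball_mem_nhds 0 hR0) hfB
    have hfreq : ∃ᶠ z in nhdsWithin (0:ℂ) {(0:ℂ)}ᶜ, f z = 0 :=
      (hev.filter_mono nhdsWithin_le_nhds).frequently
    exact (hf.analyticOnNhd hU).eqOn_zero_of_preconnected_of_frequently_eq_zero
      hUconn.isPreconnected h0 hfreq hz
  by_contra hcontra
  push_neg at hcontra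
  obtain ⟨w, hwB, hw⟩ := hcontra
  -- membership helper
  have hmemU : ∀ z ∈ B, z ∈ U := fun z hz => hBU hz
  have habsB : ∀ z : ℂ, ‖z‖ < R → z ∈ B := by
    intro z hz; simpa [hBdef, Metric.mem_ball, Complex.dist_eq] using hz
  have habsB' : ∀ z ∈ B, ‖z‖ < R := by
    intro z hz; simpa [hBdef, Metric.mem_ball, Complex.dist_eq] using hz
  -- Step 1 : polarization along lines through the origin
  have step1 : ∀ μ : ℂ, ‖μ‖ = 1 → ∀ z ∈ B,
      f z * (starRingEnd ℂ) (f ((starRingEnd ℂ) (μ * z)))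
      - g z * (starRingEnd ℂ) (g ((starRingEnd ℂ) (μ * z)))
      - (f z * g z) * (starRingEnd ℂ) (f ((starRingEnd ℂ) (μ * z)) * g ((starRingEnd ℂ) (μ * z)))
      = 0 := by
    intro μ hμ
    set K : ℂ → ℂ := fun z => f z * (starRingEnd ℂ) (f ((starRingEnd ℂ) (μ * z)))
      - g z * (starRingEnd ℂ) (g ((starRingEnd ℂ) (μ * z)))
      - (f z * g z) * (starRingEnd ℂ) (f ((starRingEnd ℂ) (μ * z)) * g ((starRingEnd ℂ) (μ * z)))
      with hKdef
    have hmem : ∀ z ∈ B, (starRingEnd ℂ) (μ * z) ∈ U := by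
      intro z hz
      apply hmemU _ (habsB _ _)
      rw [Complex.norm_conj, norm_mul, hμ, one_mul]
      exact habsB' z hz
    -- differentiability of the conjugate pieces
    have hdconj : ∀ (F : ℂ → ℂ), DifferentiableOn ℂ F U → ∀ z ∈ B,
        DifferentiableAt ℂ (fun w => (starRingEnd ℂ) (F ((starRingEnd ℂ) (μ * w)))) z := by
      intro F hF z hz
      have hd : HasDerivAt F (deriv F ((starRingEnd ℂ) (μ * z))) ((starRingEnd ℂ) (μ * z)) :=
        (hF.differentiableAt (hU.mem_nhds (hmem z hz))).hasDerivAt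
      have h2 := hasDerivAt_conj_comp (z := μ * z) hd
      have h3 : HasDerivAt (fun w : ℂ => μ * w) μ z := by
        simpa using (hasDerivAt_id z).const_mul μ
      exact (h2.comp z h3).differentiableAt
    have hKdiff : DifferentiableOn ℂ K B := by
      intro z hz
      have h1 := hdconj f hf z hz
      have h2 := hdconj g hg z hz
      have h3 := hdconj (fun z => f z * g z) (hf.mul hg) z hz
      have hfz : DifferentiableAt ℂ f z := hf.differentiableAt (hU.mem_nhds (hmemU z hz))
      have hgz : DifferentiableAt ℂ g z := hg.differentiableAt (hU.mem_nhds (hmemU z hz))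
      have h3' : DifferentiableAt ℂ
          (fun w => (starRingEnd ℂ) (f ((starRingEnd ℂ) (μ * w)) * g ((starRingEnd ℂ) (μ * w)))) z := by
        have : (fun w => (starRingEnd ℂ) (f ((starRingEnd ℂ) (μ * w)) * g ((starRingEnd ℂ) (μ * w))))
            = (fun w => (starRingEnd ℂ) ((fun z => f z * g z) ((starRingEnd ℂ) (μ * w)))) := rfl
        rw [this]; exact h3
      exact (((hfz.mul h1).sub (hgz.mul h2)).sub ((hfz.mul hgz).mul h3')).differentiableWithinAt
    have hKana : AnalyticOnNhd ℂ K B := hKdiff.analyticOnNhd hBopen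
    -- the direction τ of the line fixed by `z ↦ conj (μ z)`
    obtain ⟨τ, hτ2⟩ : ∃ τ : ℂ, τ ^ 2 = (starRingEnd ℂ) μ := by
      have hμ0 : (starRingEnd ℂ) μ ≠ 0 := by
        simp only [ne_eq, map_eq_zero]
        intro h; rw [h] at hμ; simp at hμ
      exact ⟨Complex.exp (Complex.log ((starRingEnd ℂ) μ) / 2), by
        rw [← Complex.exp_nat_mul]
        push_cast
        rw [show (2:ℂ) * (Complex.log ((starRingEnd ℂ) μ) / 2) = Complex.log ((starRingEnd ℂ) μ) by ring]
        exact Complex.exp_log hμ0⟩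
    have hτabs : ‖τ‖ = 1 := by
      have : ‖τ‖ ^ 2 = 1 := by
        rw [← norm_pow, hτ2, Complex.norm_conj, hμ]
      nlinarith [norm_nonneg τ, this]
    have hτ0 : τ ≠ 0 := by
      intro h; rw [h] at hτabs; simp at hτabs
    have hline : ∀ t : ℝ, (starRingEnd ℂ) (μ * ((t:ℂ) * τ)) = (t:ℂ) * τ := by
      intro t
      have hττ : τ * (starRingEnd ℂ) τ = 1 := by
        rw [Complex.mul_conj, Complex.normSq_eq_norm_sq, hτabs]; norm_num
      have hμτ : (starRingEnd ℂ) (μ * τ) = τ := by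
        rw [map_mul]
        have : (starRingEnd ℂ) μ = τ ^ 2 := hτ2.symm
        rw [this]
        calc τ ^ 2 * (starRingEnd ℂ) τ = τ * (τ * (starRingEnd ℂ) τ) := by ring
          _ = τ := by rw [hττ, mul_one]
      calc (starRingEnd ℂ) (μ * ((t:ℂ) * τ)) = (starRingEnd ℂ) ((t:ℂ)) * (starRingEnd ℂ) (μ * τ) := by
            rw [← map_mul]; ring_nf
        _ = (t:ℂ) * τ := by rw [Complex.conj_ofReal, hμτ]
    -- K vanishes along the line, frequently near 0
    have hγ : Filter.Tendsto (fun t : ℝ => (t:ℂ) * τ) (nhdsWithin (0:ℝ) {(0:ℝ)}ᶜ)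
        (nhdsWithin (0:ℂ) {(0:ℂ)}ᶜ) := by
      rw [tendsto_nhdsWithin_iff]
      constructor
      · have hcont : Filter.Tendsto (fun t : ℝ => (t:ℂ) * τ) (nhds (0:ℝ)) (nhds (0:ℂ)) := by
          exact (by fun_prop : Continuous fun t : ℝ => (t:ℂ) * τ).tendsto' (0:ℝ) (0:ℂ) (by simp)
        exact hcont.mono_left nhdsWithin_le_nhds
      · filter_upwards [self_mem_nhdsWithin] with t ht
        simp only [Set.mem_compl_iff, Set.mem_singleton_iff] at ht ⊢
        intro h
        rcases mul_eq_zero.1 h with h | h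
        · exact ht (by exact_mod_cast h)
        · exact hτ0 h
    have hKline : ∀ᶠ (t : ℝ) in nhdsWithin (0:ℝ) {(0:ℝ)}ᶜ, K ((t:ℂ) * τ) = 0 := by
      have hev : ∀ᶠ t in nhds (0:ℝ), |t| < R := by
        have : Filter.Tendsto (fun t : ℝ => |t|) (nhds 0) (nhds 0) := by
          simpa using _root_.continuous_abs.tendsto (0:ℝ)
        exact this.eventually_lt_const hR0
      apply Filter.Eventually.filter_mono nhdsWithin_le_nhds
      filter_upwards [hev] with t ht
      have hzB : ((t:ℂ) * τ) ∈ B := by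
        apply habsB
        rw [norm_mul, Complex.norm_real, Real.norm_eq_abs, hτabs, mul_one]
        exact ht
      rw [hKdef]
      simp only
      rw [hline t]
      exact hpt _ (hmemU _ hzB)
    have hfreq : ∃ᶠ z in nhdsWithin (0:ℂ) {(0:ℂ)}ᶜ, K z = 0 :=
      hγ.frequently hKline.frequently
    exact hKana.eqOn_zero_of_preconnected_of_frequently_eq_zero hBconn h0B hfreq
  -- Step 2 : full polarization
  have step2 : ∀ w' ∈ B, w' ≠ 0 → ∀ z ∈ B,
      f z * (starRingEnd ℂ) (f w') - g z * (starRingEnd ℂ) (g w')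
      - (f z * g z) * (starRingEnd ℂ) (f w' * g w') = 0 := by
    intro w' hw'B hw'0
    set ψ : ℂ → ℂ := fun z => f z * (starRingEnd ℂ) (f w') - g z * (starRingEnd ℂ) (g w')
      - (f z * g z) * (starRingEnd ℂ) (f w' * g w') with hψdef
    have hψdiff : DifferentiableOn ℂ ψ B := by
      have hfB' : DifferentiableOn ℂ f B := hf.mono hBU
      have hgB' : DifferentiableOn ℂ g B := hg.mono hBU
      exact ((hfB'.mul_const _).sub (hgB'.mul_const _)).sub ((hfB'.mul hgB').mul_const _)
    have hψana : AnalyticOnNhd ℂ ψ B := hψdiff.analyticOnNhd hBopen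
    have hcwB : (starRingEnd ℂ) w' ∈ B := by
      apply habsB; rw [Complex.norm_conj]; exact habsB' _ hw'B
    have hcw0 : (starRingEnd ℂ) w' ≠ 0 := by simpa using hw'0
    -- the curve on the circle of radius |w'| through conj w'
    set γ : ℝ → ℂ := fun t => (starRingEnd ℂ) w' * ((1 + t * Complex.I) / ((‖1 + t * Complex.I‖ : ℝ) : ℂ)) with hγdef
    have hden : ∀ t : ℝ, (1 + (t:ℂ) * Complex.I) ≠ 0 := by
      intro t h
      have := congrArg Complex.re h
      simp at this
    have hdenabs : ∀ t : ℝ, ‖1 + (t:ℂ) * Complex.I‖ ≠ 0 := fun t =>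
      norm_ne_zero_iff.mpr (hden t)
    have hγabs : ∀ t : ℝ, ‖γ t‖ = ‖w'‖ := by
      intro t
      rw [hγdef]
      simp only
      rw [norm_mul, norm_div, Complex.norm_conj, Complex.norm_real,
        norm_norm, div_self (hdenabs t), mul_one]
    have hγne : ∀ t : ℝ, t ≠ 0 → γ t ≠ (starRingEnd ℂ) w' := by
      intro t ht h
      rw [hγdef] at h
      simp only at h
      have h2 : (1 + (t:ℂ) * Complex.I) / ((‖1 + t * Complex.I‖ : ℝ) : ℂ) = 1 := by
        apply mul_left_cancel₀ hcw0
        rw [h, mul_one]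
      rw [div_eq_one_iff_eq (by exact_mod_cast hdenabs t)] at h2
      have h3 : t = 0 := by
        have := congrArg Complex.im h2
        simpa using this
      exact ht h3
    have hγ0 : γ 0 = (starRingEnd ℂ) w' := by
      rw [hγdef]; simp
    have hγcont : Filter.Tendsto γ (nhds (0:ℝ)) (nhds ((starRingEnd ℂ) w')) := by
      have hc : ContinuousAt γ 0 := by
        apply ContinuousAt.mul continuousAt_const
        apply ContinuousAt.div
        · exact (continuous_const.add (Complex.continuous_ofReal.mul continuous_const)).continuousAt
        · apply Complex.continuous_ofReal.continuousAt.comp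
          exact (continuous_norm.comp
            (continuous_const.add (Complex.continuous_ofReal.mul continuous_const))).continuousAt
        · simp
      have := hc.tendsto
      rwa [hγ0] at this
    have hγtend : Filter.Tendsto γ (nhdsWithin (0:ℝ) {(0:ℝ)}ᶜ)
        (nhdsWithin ((starRingEnd ℂ) w') {((starRingEnd ℂ) w')}ᶜ) := by
      rw [tendsto_nhdsWithin_iff]
      refine ⟨hγcont.mono_left nhdsWithin_le_nhds, ?_⟩
      filter_upwards [self_mem_nhdsWithin] with t ht
      simp only [Set.mem_compl_iff, Set.mem_singleton_iff] at ht ⊢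
      exact hγne t ht
    have hψcirc : ∀ t : ℝ, ψ (γ t) = 0 := by
      intro t
      have hγtB : γ t ∈ B := by
        apply habsB; rw [hγabs]; exact habsB' _ hw'B
      have hγt0 : γ t ≠ 0 := by
        intro h
        have := hγabs t
        rw [h] at this
        simp only [norm_zero] at this
        exact hw'0 (by simpa using (norm_eq_zero.1 this.symm))
      set μ : ℂ := (starRingEnd ℂ) w' / γ t with hμdef
      have hμabs : ‖μ‖ = 1 := by
        rw [hμdef, norm_div, Complex.norm_conj, hγabs, div_self]
        simp only [ne_eq, norm_eq_zero]
        exact hw'0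
      have hμγ : μ * γ t = (starRingEnd ℂ) w' := by
        rw [hμdef, div_mul_cancel₀]
        exact hγt0
      have := step1 μ hμabs (γ t) hγtB
      rw [hμγ, Complex.conj_conj] at this
      exact this
    have hψfreq : ∃ᶠ z in nhdsWithin ((starRingEnd ℂ) w') {((starRingEnd ℂ) w')}ᶜ, ψ z = 0 := by
      apply hγtend.frequently
      exact (Filter.Eventually.of_forall (fun t => hψcirc t)).frequently
    exact hψana.eqOn_zero_of_preconnected_of_frequently_eq_zero hBconn hcwB hψfreq
  -- Step 3 : derive the contradiction
  have hw0 : w ≠ 0 := fun h => hw (by rw [h]; exact hf0)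
  have hgw : g w ≠ 0 := by
    intro h
    have h1 := heq w (hmemU w hwB)
    rw [h] at h1
    simp only [map_zero, norm_zero, ne_eq, OfNat.ofNat_ne_zero, not_false_eq_true, zero_pow, sub_zero,
      mul_one] at h1
    have : ‖f w‖ ^ 2 = 0 := by linarith
    exact hw (norm_eq_zero.1 (pow_eq_zero_iff (n := 2) (by norm_num) |>.1 this))
  have hrel := step2 w hwB hw0
  -- frequently near 0, f ≠ 0 and in B
  have hfreqne : ∃ᶠ z in nhdsWithin (0:ℂ) {(0:ℂ)}ᶜ, (z ∈ B ∧ f z ≠ 0) := by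
    by_contra hnot
    rw [Filter.not_frequently] at hnot
    have hevB : ∀ᶠ z in nhdsWithin (0:ℂ) {(0:ℂ)}ᶜ, z ∈ B :=
      Filter.Eventually.filter_mono nhdsWithin_le_nhds
        (Filter.eventually_of_mem (Metric.ball_mem_nhds 0 hR0) (fun z hz => hz))
    have hev0 : ∀ᶠ z in nhdsWithin (0:ℂ) {(0:ℂ)}ᶜ, f z = 0 := by
      filter_upwards [hnot, hevB] with z h1 h2
      by_contra h3
      exact h1 ⟨h2, h3⟩
    have := ((hf.mono hBU).analyticOnNhd hBopen).eqOn_zero_of_preconnected_of_frequently_eq_zero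
      hBconn h0B hev0.frequently
    exact hw (this hwB)
  -- the continuous function that must vanish at 0
  set D : ℂ → ℝ := fun z => Complex.normSq (f w) * Complex.normSq (1 - (starRingEnd ℂ) (g w) * g z)
    - Complex.normSq (g w) * (1 - Complex.normSq (g z)) with hDdef
  have hD0 : ∀ z ∈ B, f z ≠ 0 → D z = 0 := by
    intro z hzB hfz
    have h1 := hrel z hzB
    have h2 : f z * (starRingEnd ℂ) (f w) * (1 - (starRingEnd ℂ) (g w) * g z)
        = g z * (starRingEnd ℂ) (g w) := by
      rw [map_mul] at h1
      linear_combination h1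
    have h3 := congrArg Complex.normSq h2
    rw [map_mul, map_mul, map_mul] at h3
    -- the pointwise identity at z in normSq form
    have h4 : Complex.normSq (f z) * (1 - Complex.normSq (g z)) = Complex.normSq (g z) := by
      have h := heq z (hmemU z hzB)
      rw [Complex.normSq_eq_norm_sq, Complex.normSq_eq_norm_sq]
      nlinarith [h]
    have hfz2 : Complex.normSq (f z) ≠ 0 := fun h => hfz (Complex.normSq_eq_zero.1 h)
    rw [hDdef]
    simp only
    have h5 : Complex.normSq (f z) * (Complex.normSq (f w)
        * Complex.normSq (1 - (starRingEnd ℂ) (g w) * g z))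
        = Complex.normSq (f z) * (Complex.normSq (g w) * (1 - Complex.normSq (g z))) := by
      calc Complex.normSq (f z) * (Complex.normSq (f w)
            * Complex.normSq (1 - (starRingEnd ℂ) (g w) * g z))
          = Complex.normSq (g z) * Complex.normSq (g w) := by
            rw [Complex.normSq_conj, Complex.normSq_conj] at h3
            linear_combination h3
        _ = (Complex.normSq (f z) * (1 - Complex.normSq (g z))) * Complex.normSq (g w) := by
            rw [h4]
        _ = Complex.normSq (f z) * (Complex.normSq (g w) * (1 - Complex.normSq (g z))) := by ring
    have := mul_left_cancel₀ hfz2 h5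
    linarith [this]
  have hDcont : ContinuousAt D 0 := by
    have hgc : ContinuousAt g 0 := (hg.differentiableAt (hU.mem_nhds h0)).continuousAt
    apply ContinuousAt.sub
    · exact continuousAt_const.mul (Complex.continuous_normSq.continuousAt.comp
        (continuousAt_const.sub (continuousAt_const.mul hgc)))
    · exact continuousAt_const.mul (continuousAt_const.sub
        (Complex.continuous_normSq.continuousAt.comp hgc))
  have hD00 : D 0 = 0 := by
    have ht : Filter.Tendsto D (nhdsWithin (0:ℂ) {(0:ℂ)}ᶜ) (nhds (D 0)) :=
      hDcont.tendsto.mono_left nhdsWithin_le_nhds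
    have hfr : ∃ᶠ z in nhdsWithin (0:ℂ) {(0:ℂ)}ᶜ, D z ∈ ({0} : Set ℝ) := by
      apply hfreqne.mono
      intro z hz
      exact hD0 z hz.1 hz.2
    have := mem_closure_of_frequently_of_tendsto hfr ht
    rwa [closure_singleton, Set.mem_singleton_iff] at this
  -- compute D 0 and conclude
  rw [hDdef] at hD00
  simp only [hg0, mul_zero, sub_zero, map_zero, map_one, mul_one] at hD00
  -- so normSq (f w) = normSq (g w)
  have hfw_gw : Complex.normSq (f w) = Complex.normSq (g w) := by linarith
  have hfin := heq w (hmemU w hwB)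
  have hfwpos : 0 < ‖f w‖ := norm_pos_iff.mpr hw
  have habs_eq : ‖f w‖ ^ 2 = ‖g w‖ ^ 2 := by
    rw [Complex.sq_norm, Complex.sq_norm]; exact hfw_gw
  rw [← habs_eq] at hfin
  have h4 : 0 < ‖f w‖ ^ 2 * (‖f w‖ ^ 2) := by positivity
  nlinarith [hfin, h4]
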